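/- If G is a graph of order n ≥ 3 with minimum degree δ(G) = 1 and exactly one full vertex (a vertex of degree n−1), then C(G) = n if and only if G is obtained from K_1 ∪ K_{n−1} by adding an edge joining the isolated vertex to one vertex of the complete graph K_{n−1}. -/

import Mathlib

open SimpleGraph

attribute [local instance] Classical.propDecidable

def Dominates {V : Type*} (G : SimpleGraph V) (S : Set V) : Prop :=
  ∀ v, v ∉ S → ∃ u ∈ S, G.Adj u v

def Coalition {V : Type*} (G : SimpleGraph V) (A B : Set V) : Prop :=
  Disjoint A B ∧ ¬ Dominates G A ∧ ¬ Dominates G B ∧ Dominates G (A ∪ B)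

def IsCoalitionPartition {V : Type*} (G : SimpleGraph V) (P : Finset (Set V)) : Prop :=
  (∀ A ∈ P, A.Nonempty) ∧
  (∀ A ∈ P, ∀ B ∈ P, A ≠ B → Disjoint A B) ∧
  (∀ v : V, ∃ A ∈ P, v ∈ A) ∧
  (∀ A ∈ P, (Dominates G A ∧ ∃ v, A = {v}) ∨
    (¬ Dominates G A ∧ ∃ B ∈ P, B ≠ A ∧ Coalition G A B))

noncomputable def coalitionNumber {V : Type*} (G : SimpleGraph V) : ℕ :=
  sSup {n | ∃ P : Finset (Set V), IsCoalitionPartition G P ∧ P.card = n}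

def coalitionGraph {V : Type*} (G : SimpleGraph V) (P : Finset (Set V)) :
    SimpleGraph {A : Set V // A ∈ P} where
  Adj A B := Coalition G A.1 B.1
  symm := by
    refine ⟨?_⟩
    rintro A B ⟨d, na, nb, u⟩
    exact ⟨d.symm, nb, na, by rwa [Set.union_comm]⟩
  loopless := by
    refine ⟨?_⟩
    rintro ⟨A, hA⟩ ⟨d, na, nb, u⟩
    rw [Set.union_self] at u
    exact na u

/-- The graph obtained from `K_1 ∪ K_{n-1}` by adding an edge joining the isolated
vertex `0` to the vertex `1` of the complete graph on the remaining vertices. -/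
def K1UnionCompletePlusEdge (n : ℕ) : SimpleGraph (Fin n) where
  Adj a b := a ≠ b ∧ ((a.val ≠ 0 ∧ b.val ≠ 0) ∨ (a.val = 0 ∧ b.val = 1) ∨
    (a.val = 1 ∧ b.val = 0))
  symm := by refine ⟨?_⟩; rintro a b ⟨h1, h2⟩; exact ⟨h1.symm, by tauto⟩
  loopless := by refine ⟨?_⟩; rintro a ⟨h, -⟩; exact h rfl

section Aux

variable {V : Type*} [Fintype V] (G : SimpleGraph V)

lemma part_card_le {P : Finset (Set V)} (hne : ∀ A ∈ P, A.Nonempty)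
    (hdisj : ∀ A ∈ P, ∀ B ∈ P, A ≠ B → Disjoint A B) :
    P.card ≤ Fintype.card V := by
  classical
  choose fch hfch using fun A (hA : A ∈ P) => hne A hA
  rcases P.eq_empty_or_nonempty with h | ⟨A0, hA0⟩
  · simp [h]
  have : Nonempty V := ⟨fch A0 hA0⟩
  rw [← Finset.card_univ]
  apply Finset.card_le_card_of_injOn
      (fun A => if h : A ∈ P then fch A h else Classical.arbitrary V)
      (fun A _ => Finset.mem_univ _)
  · intro A hA B hB hEq
    simp only [Finset.mem_coe] at hA hB
    simp only [dif_pos hA, dif_pos hB] at hEq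
    by_contra hne'
    exact Set.disjoint_left.mp (hdisj A hA B hB hne') (hfch A hA) (hEq ▸ hfch B hB)

lemma full_of_degree {f : V} (h : G.degree f = Fintype.card V - 1) :
    ∀ x, x ≠ f → G.Adj f x := by
  intro x hx
  have hsub : G.neighborFinset f ⊆ Finset.univ.erase f := by
    intro y hy
    rw [SimpleGraph.mem_neighborFinset] at hy
    exact Finset.mem_erase.mpr ⟨(G.ne_of_adj hy).symm, Finset.mem_univ _⟩
  have hcard : (Finset.univ.erase f).card = Fintype.card V - 1 := by
    rw [Finset.card_erase_of_mem (Finset.mem_univ f), Finset.card_univ]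
  have heq := Finset.eq_of_subset_of_card_le hsub (by
    rw [hcard, ← h, SimpleGraph.card_neighborFinset_eq_degree])
  have : x ∈ G.neighborFinset f := by
    rw [heq]; exact Finset.mem_erase.mpr ⟨hx, Finset.mem_univ _⟩
  exact (SimpleGraph.mem_neighborFinset G f x).mp this

lemma degree_of_full {f : V} (h : ∀ x, x ≠ f → G.Adj f x) :
    G.degree f = Fintype.card V - 1 := by
  have heq : G.neighborFinset f = Finset.univ.erase f := by
    ext y
    rw [SimpleGraph.mem_neighborFinset, Finset.mem_erase]
    constructor
    · intro hy; exact ⟨(G.ne_of_adj hy).symm, Finset.mem_univ _⟩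
    · intro hy; exact h y hy.1
  rw [← SimpleGraph.card_neighborFinset_eq_degree, heq,
    Finset.card_erase_of_mem (Finset.mem_univ f), Finset.card_univ]

lemma u_adj_iff {u f : V} (hdeg : G.degree u = 1) (hfu : G.Adj u f) :
    ∀ x, G.Adj u x ↔ x = f := by
  have hf : f ∈ G.neighborFinset u := (SimpleGraph.mem_neighborFinset G u f).mpr hfu
  have heq : G.neighborFinset u = {f} := by
    apply (Finset.eq_of_subset_of_card_le (Finset.singleton_subset_iff.mpr hf) ?_).symm
    rw [SimpleGraph.card_neighborFinset_eq_degree, hdeg, Finset.card_singleton]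
  intro x
  rw [← SimpleGraph.mem_neighborFinset, heq, Finset.mem_singleton]

omit [Fintype V] in
lemma dom_singleton_iff {v : V} : Dominates G {v} ↔ ∀ x, x ≠ v → G.Adj v x := by
  constructor
  · intro h x hx
    obtain ⟨w, hw, hadj⟩ := h x (by simpa using hx)
    rwa [Set.mem_singleton_iff.mp hw] at hadj
  · intro h x hx
    exact ⟨v, rfl, h x (by simpa using hx)⟩

lemma exists_third {u f : V} (hn : 3 ≤ Fintype.card V) : ∃ w : V, w ≠ u ∧ w ≠ f := by
  by_contra h
  push_neg at h
  have : (Finset.univ : Finset V) ⊆ {u, f} := by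
    intro w _
    rcases Classical.em (w = u) with h1 | h1
    · simp [h1]
    · simp [h w h1]
  have := Finset.card_le_card this
  rw [Finset.card_univ] at this
  have h2 : ({u, f} : Finset V).card ≤ 2 := Finset.card_insert_le _ _ |>.trans (by simp)
  omega

end Aux

lemma lemA {V : Type*} [Fintype V] (G : SimpleGraph V) (u f : V) (huf : u ≠ f)
    (hn : 3 ≤ Fintype.card V)
    (hAdj : ∀ a b, G.Adj a b ↔ (a ≠ b ∧ ((a ≠ u ∧ b ≠ u) ∨ (a = u ∧ b = f) ∨ (a = f ∧ b = u)))) :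
    coalitionNumber G = Fintype.card V := by
  classical
  -- basic adjacency facts
  have adj_uf : G.Adj u f := (hAdj u f).mpr ⟨huf, Or.inr (Or.inl ⟨rfl, rfl⟩)⟩
  have dom_f : Dominates G {f} := by
    rw [dom_singleton_iff]
    intro x hx
    rcases Classical.em (x = u) with h1 | h1
    · exact (hAdj f x).mpr ⟨Ne.symm hx, Or.inr (Or.inr ⟨rfl, h1⟩)⟩
    · exact (hAdj f x).mpr ⟨Ne.symm hx, Or.inl ⟨huf.symm, h1⟩⟩
  have ndom : ∀ v : V, v ≠ f → ¬ Dominates G {v} := by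
    intro v hv hdom
    rw [dom_singleton_iff] at hdom
    rcases Classical.em (v = u) with h1 | h1
    · subst h1
      obtain ⟨w, hwu, hwf⟩ := exists_third (u := v) (f := f) hn
      have := (hAdj v w).mp (hdom w hwu)
      rcases this.2 with ⟨h, _⟩ | ⟨_, h⟩ | ⟨h, _⟩
      · exact h rfl
      · exact hwf h
      · exact hv h
    · have := (hAdj v u).mp (hdom u (fun h => h1 h.symm))
      rcases this.2 with ⟨_, h⟩ | ⟨h, _⟩ | ⟨h, _⟩
      · exact h rfl
      · exact h1 h
      · exact hv h
  have dom_pair : ∀ v : V, v ≠ u → v ≠ f → Dominates G ({v} ∪ {u}) := by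
    intro v hvu hvf x hx
    simp only [Set.mem_union, Set.mem_singleton_iff, not_or] at hx
    rcases Classical.em (x = f) with h1 | h1
    · subst h1
      exact ⟨u, Or.inr rfl, adj_uf⟩
    · refine ⟨v, Or.inl rfl, (hAdj v x).mpr ⟨fun h => hx.1 h.symm, Or.inl ⟨hvu, hx.2⟩⟩⟩
  -- the partition of singletons
  set P : Finset (Set V) := Finset.univ.image (fun v : V => ({v} : Set V)) with hP
  have hmemP : ∀ v : V, ({v} : Set V) ∈ P := by
    intro v; exact Finset.mem_image.mpr ⟨v, Finset.mem_univ v, rfl⟩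
  have hPcard : P.card = Fintype.card V := by
    rw [hP, Finset.card_image_of_injective _ Set.singleton_injective, Finset.card_univ]
  have hPform : ∀ A ∈ P, ∃ v : V, A = {v} := by
    intro A hA
    obtain ⟨v, _, hv⟩ := Finset.mem_image.mp hA
    exact ⟨v, hv.symm⟩
  have hCP : IsCoalitionPartition G P := by
    refine ⟨?_, ?_, ?_, ?_⟩
    · intro A hA; obtain ⟨v, rfl⟩ := hPform A hA; exact ⟨v, rfl⟩
    · intro A hA B hB hne
      obtain ⟨a, rfl⟩ := hPform A hA
      obtain ⟨b, rfl⟩ := hPform B hB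
      rw [Set.disjoint_singleton]
      intro h; exact hne (by rw [h])
    · intro v; exact ⟨{v}, hmemP v, rfl⟩
    · intro A hA
      obtain ⟨v, rfl⟩ := hPform A hA
      rcases Classical.em (v = f) with hvf | hvf
      · rw [hvf]
        exact Or.inl ⟨dom_f, f, rfl⟩
      · refine Or.inr ⟨ndom v hvf, ?_⟩
        rcases Classical.em (v = u) with hvu | hvu
        · subst hvu
          obtain ⟨w, hwu, hwf⟩ := exists_third (u := v) (f := f) hn
          refine ⟨{w}, hmemP w, ?_, ?_, ndom v hvf, ndom w hwf, ?_⟩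
          · intro h
            exact hwu (Set.singleton_eq_singleton_iff.mp h)
          · rw [Set.disjoint_singleton]; exact fun h => hwu h.symm
          · rw [Set.union_comm]
            exact dom_pair w hwu hwf
        · refine ⟨{u}, hmemP u, ?_, ?_, ndom v hvf, ndom u huf, dom_pair v hvu hvf⟩
          · intro h
            exact hvu (Set.singleton_eq_singleton_iff.mp h).symm
          · rw [Set.disjoint_singleton]; exact fun h => hvu h
  -- compute the sSup
  have hub : ∀ k ∈ {n | ∃ P : Finset (Set V), IsCoalitionPartition G P ∧ P.card = n},
      k ≤ Fintype.card V := by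
    rintro k ⟨Q, hQ, rfl⟩
    exact part_card_le hQ.1 hQ.2.1
  have hmem : Fintype.card V ∈
      {n | ∃ P : Finset (Set V), IsCoalitionPartition G P ∧ P.card = n} := ⟨P, hCP, hPcard⟩
  exact le_antisymm (csSup_le ⟨_, hmem⟩ hub) (le_csSup ⟨Fintype.card V, hub⟩ hmem)

lemma iso_of_char {V : Type*} [Fintype V] (G : SimpleGraph V) (u f : V) (huf : u ≠ f)
    (hn : 3 ≤ Fintype.card V)
    (hAdj : ∀ a b, G.Adj a b ↔ (a ≠ b ∧ ((a ≠ u ∧ b ≠ u) ∨ (a = u ∧ b = f) ∨ (a = f ∧ b = u)))) :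
    Nonempty (G ≃g K1UnionCompletePlusEdge (Fintype.card V)) := by
  classical
  set n := Fintype.card V with hncard
  have h0 : (0 : ℕ) < n := by omega
  have h1 : (1 : ℕ) < n := by omega
  set z0 : Fin n := ⟨0, h0⟩
  set z1 : Fin n := ⟨1, h1⟩
  have hz01 : z0 ≠ z1 := by simp [z0, z1, Fin.ext_iff]
  let e0 : V ≃ Fin n := Fintype.equivFin V
  let e1 : V ≃ Fin n := e0.trans (Equiv.swap (e0 u) z0)
  have he1u : e1 u = z0 := by simp [e1, Equiv.swap_apply_left]
  let e2 : V ≃ Fin n := e1.trans (Equiv.swap (e1 f) z1)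
  have he1f : e1 f ≠ z0 := by
    rw [← he1u]
    exact fun h => huf (e1.injective h.symm)
  have he2f : e2 f = z1 := by simp [e2, Equiv.swap_apply_left]
  have he2u : e2 u = z0 := by
    simp only [e2, Equiv.trans_apply, he1u]
    rw [Equiv.swap_apply_of_ne_of_ne (Ne.symm he1f) hz01]
  have he2u' : ∀ x, (e2 x).val = 0 ↔ x = u := by
    intro x
    constructor
    · intro h
      apply e2.injective
      rw [he2u]
      exact Fin.ext (by simpa [z0] using h)
    · rintro rfl; rw [he2u]
  have he2f' : ∀ x, (e2 x).val = 1 ↔ x = f := by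
    intro x
    constructor
    · intro h
      apply e2.injective
      rw [he2f]
      exact Fin.ext (by simpa [z1] using h)
    · rintro rfl; rw [he2f]
  refine ⟨⟨e2, ?_⟩⟩
  intro a b
  show (K1UnionCompletePlusEdge n).Adj (e2 a) (e2 b) ↔ G.Adj a b
  rw [hAdj]
  show (e2 a ≠ e2 b ∧ _) ↔ _
  rw [ne_eq, EmbeddingLike.apply_eq_iff_eq]
  constructor
  · rintro ⟨hne, h | h | h⟩
    · exact ⟨hne, Or.inl ⟨fun hh => h.1 ((he2u' a).mpr hh),
        fun hh => h.2 ((he2u' b).mpr hh)⟩⟩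
    · exact ⟨hne, Or.inr (Or.inl ⟨(he2u' a).mp h.1, (he2f' b).mp h.2⟩)⟩
    · exact ⟨hne, Or.inr (Or.inr ⟨(he2f' a).mp h.1, (he2u' b).mp h.2⟩)⟩
  · rintro ⟨hne, h | h | h⟩
    · exact ⟨hne, Or.inl ⟨fun hh => h.1 ((he2u' a).mp hh),
        fun hh => h.2 ((he2u' b).mp hh)⟩⟩
    · exact ⟨hne, Or.inr (Or.inl ⟨(he2u' a).mpr h.1, (he2f' b).mpr h.2⟩)⟩
    · exact ⟨hne, Or.inr (Or.inr ⟨(he2f' a).mpr h.1, (he2u' b).mpr h.2⟩)⟩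

lemma char_of_iso {V : Type*} [Fintype V] (G : SimpleGraph V)
    (hn : 3 ≤ Fintype.card V)
    (φ : G ≃g K1UnionCompletePlusEdge (Fintype.card V)) :
    ∃ u f : V, u ≠ f ∧
      ∀ a b, G.Adj a b ↔ (a ≠ b ∧ ((a ≠ u ∧ b ≠ u) ∨ (a = u ∧ b = f) ∨ (a = f ∧ b = u))) := by
  classical
  set n := Fintype.card V with hncard
  have h0 : (0 : ℕ) < n := by omega
  have h1 : (1 : ℕ) < n := by omega
  set z0 : Fin n := ⟨0, h0⟩
  set z1 : Fin n := ⟨1, h1⟩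
  refine ⟨φ.symm z0, φ.symm z1, ?_, ?_⟩
  · intro h
    have := φ.symm.injective
    have h01 : z0 = z1 := (Equiv.injective φ.symm.toEquiv) (by exact_mod_cast h)
    simp [z0, z1, Fin.ext_iff] at h01
  · intro a b
    have hu' : ∀ x : V, x = φ.symm z0 ↔ (φ x).val = 0 := by
      intro x
      constructor
      · rintro rfl; simp [z0]
      · intro h
        have : φ x = z0 := Fin.ext (by simpa [z0] using h)
        rw [← this]; simp
    have hf' : ∀ x : V, x = φ.symm z1 ↔ (φ x).val = 1 := by
      intro x
      constructor
      · rintro rfl; simp [z1]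
      · intro h
        have : φ x = z1 := Fin.ext (by simpa [z1] using h)
        rw [← this]; simp
    rw [← φ.map_rel_iff]
    show (φ a ≠ φ b ∧ _) ↔ _
    rw [ne_eq, EmbeddingLike.apply_eq_iff_eq]
    constructor
    · rintro ⟨hne, h | h | h⟩
      · exact ⟨hne, Or.inl ⟨fun hh => h.1 ((hu' a).mp hh), fun hh => h.2 ((hu' b).mp hh)⟩⟩
      · exact ⟨hne, Or.inr (Or.inl ⟨(hu' a).mpr h.1, (hf' b).mpr h.2⟩)⟩
      · exact ⟨hne, Or.inr (Or.inr ⟨(hf' a).mpr h.1, (hu' b).mpr h.2⟩)⟩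
    · rintro ⟨hne, h | h | h⟩
      · exact ⟨hne, Or.inl ⟨fun hh => h.1 ((hu' a).mpr hh), fun hh => h.2 ((hu' b).mpr hh)⟩⟩
      · exact ⟨hne, Or.inr (Or.inl ⟨(hu' a).mp h.1, (hf' b).mp h.2⟩)⟩
      · exact ⟨hne, Or.inr (Or.inr ⟨(hf' a).mp h.1, (hu' b).mp h.2⟩)⟩

lemma forward_char {V : Type*} [Fintype V] (G : SimpleGraph V)
    (hn : 3 ≤ Fintype.card V) (hδ : G.minDegree = 1)
    (hfull : ∃! v : V, G.degree v = Fintype.card V - 1)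
    (hC : coalitionNumber G = Fintype.card V) :
    ∃ u f : V, u ≠ f ∧
      ∀ a b, G.Adj a b ↔ (a ≠ b ∧ ((a ≠ u ∧ b ≠ u) ∨ (a = u ∧ b = f) ∨ (a = f ∧ b = u))) := by
  classical
  have hV : Nonempty V := Fintype.card_pos_iff.mp (by omega)
  obtain ⟨f, hfdeg, hfuniq⟩ := hfull
  obtain ⟨u, hudeg⟩ := G.exists_minimal_degree_vertex
  rw [hδ] at hudeg
  have huf : u ≠ f := by
    intro h
    rw [h, hfdeg] at hudeg
    omega
  have hfull' : ∀ x, x ≠ f → G.Adj f x := full_of_degree G hfdeg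
  have hadj_uf : G.Adj u f := (hfull' u huf).symm
  have hu_adj : ∀ x, G.Adj u x ↔ x = f := u_adj_iff G hudeg.symm hadj_uf
  -- extract a partition of cardinality |V|
  set S : Set ℕ := {n | ∃ P : Finset (Set V), IsCoalitionPartition G P ∧ P.card = n} with hS
  have hbdd : BddAbove S := by
    refine ⟨Fintype.card V, ?_⟩
    rintro k ⟨Q, hQ, rfl⟩
    exact part_card_le hQ.1 hQ.2.1
  have hSne : S.Nonempty := by
    by_contra h
    rw [Set.not_nonempty_iff_eq_empty] at h
    rw [coalitionNumber, ← hS, h, csSup_empty] at hC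
    simp at hC
    omega
  have hmem : Fintype.card V ∈ S := by
    rw [← hC]
    exact Nat.sSup_mem hSne hbdd
  obtain ⟨P, hP, hPcard⟩ := hmem
  obtain ⟨hP1, hP2, hP3, hP4⟩ := hP
  -- each part is a singleton
  have hsing : ∀ v : V, ({v} : Set V) ∈ P := by
    -- the function sending v to its part
    have hex : ∀ v : V, ∃ A : {A : Set V // A ∈ P}, v ∈ A.1 := by
      intro v
      obtain ⟨A, hA, hvA⟩ := hP3 v
      exact ⟨⟨A, hA⟩, hvA⟩
    choose pt hpt using hex
    have hptuniq : ∀ (v : V) (A : Set V) (hA : A ∈ P), v ∈ A → pt v = ⟨A, hA⟩ := by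
      intro v A hA hvA
      by_contra h
      have hne : (pt v).1 ≠ A := fun hh => h (Subtype.ext hh)
      exact Set.disjoint_left.mp (hP2 _ (pt v).2 A hA hne) (hpt v) hvA
    have hsurj : Function.Surjective pt := by
      rintro ⟨A, hA⟩
      obtain ⟨a, ha⟩ := hP1 A hA
      exact ⟨a, hptuniq a A hA ha⟩
    have hcardeq : Fintype.card V = Fintype.card {A : Set V // A ∈ P} := by
      rw [Fintype.card_coe, hPcard]
    have hbij : Function.Bijective pt :=
      (Fintype.bijective_iff_surjective_and_card pt).mpr ⟨hsurj, hcardeq⟩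
    intro v
    obtain ⟨A, hA, hvA⟩ := hP3 v
    have : A = {v} := by
      apply Set.eq_singleton_iff_unique_mem.mpr
      refine ⟨hvA, ?_⟩
      intro x hxA
      apply hbij.1
      rw [hptuniq x A hA hxA, hptuniq v A hA hvA]
    rwa [← this]
  -- singleton dominating implies full vertex
  have hdomf : ∀ v : V, Dominates G {v} → v = f := by
    intro v hv
    rw [dom_singleton_iff] at hv
    exact hfuniq v (degree_of_full G hv)
  -- clique structure
  have hclq : ∀ v : V, v ≠ u → v ≠ f → ∀ y, y ≠ v → y ≠ u → G.Adj v y := by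
    intro v hvu hvf
    have hvP := hP4 ({v} : Set V) (hsing v)
    rcases hvP with ⟨hdom, -⟩ | ⟨-, B, hBP, hBne, hco⟩
    · exact absurd (hdomf v hdom) hvf
    obtain ⟨z, hz, hzB⟩ : ∃ z : V, z ∈ B ∧ B = {z} := by
      obtain ⟨z, hzB⟩ := hP1 B hBP
      have h1 := hP3 z
      -- B must be a singleton since all its elements give B = {z}
      obtain ⟨A, hA, hzA⟩ := h1
      refine ⟨z, hzB, ?_⟩
      -- B and {z} are both parts containing z
      have h2 : ¬ Disjoint B ({z} : Set V) := by
        rw [Set.disjoint_singleton_right]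
        exact fun h => h hzB
      by_contra hne
      exact h2 (hP2 B hBP {z} (hsing z) hne)
    subst hzB
    obtain ⟨hdisj, hnv, hnz, hdom⟩ := hco
    have hzf : z ≠ f := by
      intro h
      apply hnz
      rw [h, dom_singleton_iff]
      exact hfull'
    have hzu : z = u := by
      by_contra hzu
      have hu_notin : u ∉ ({v} : Set V) ∪ {z} := by
        simp only [Set.mem_union, Set.mem_singleton_iff, not_or]
        exact ⟨fun h => hvu h.symm, fun h => hzu h.symm⟩
      obtain ⟨w, hw, hadj⟩ := hdom u hu_notin
      have := (hu_adj w).mp hadj.symm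
      simp only [Set.mem_union, Set.mem_singleton_iff] at hw
      rcases hw with rfl | rfl
      · exact hvf this
      · exact hzf this
    subst hzu
    intro y hyv hyu
    have hy_notin : y ∉ ({v} : Set V) ∪ {z} := by
      simp only [Set.mem_union, Set.mem_singleton_iff, not_or]
      exact ⟨hyv, hyu⟩
    obtain ⟨w, hw, hadj⟩ := hdom y hy_notin
    simp only [Set.mem_union, Set.mem_singleton_iff] at hw
    rcases hw with rfl | rfl
    · exact hadj
    · -- w = u, so y = f, but then v ~ f
      have := (hu_adj y).mp hadj
      subst this
      exact (hfull' v hvf).symm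
  refine ⟨u, f, huf, ?_⟩
  intro a b
  constructor
  · intro hadj
    refine ⟨G.ne_of_adj hadj, ?_⟩
    rcases Classical.em (a = u) with rfl | hau
    · exact Or.inr (Or.inl ⟨rfl, (hu_adj b).mp hadj⟩)
    rcases Classical.em (b = u) with rfl | hbu
    · exact Or.inr (Or.inr ⟨(hu_adj a).mp hadj.symm, rfl⟩)
    · exact Or.inl ⟨hau, hbu⟩
  · rintro ⟨hne, ⟨hau, hbu⟩ | ⟨rfl, rfl⟩ | ⟨rfl, rfl⟩⟩
    · rcases Classical.em (a = f) with rfl | haf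
      · exact hfull' b (Ne.symm hne)
      rcases Classical.em (b = f) with rfl | hbf
      · exact (hfull' a hne).symm
      · exact hclq a hau haf b (Ne.symm hne) hbu
    · exact hadj_uf
    · exact hadj_uf.symm

theorem stmt6 {V : Type*} [Fintype V] (G : SimpleGraph V)
    (hn : 3 ≤ Fintype.card V) (hδ : G.minDegree = 1)
    (hfull : ∃! v : V, G.degree v = Fintype.card V - 1) :
    coalitionNumber G = Fintype.card V ↔
      Nonempty (G ≃g K1UnionCompletePlusEdge (Fintype.card V)) := by
  constructor
  · intro hC
    obtain ⟨u, f, huf, hAdj⟩ := forward_char G hn hδ hfull hC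
    exact iso_of_char G u f huf hn hAdj
  · rintro ⟨φ⟩
    obtain ⟨u, f, huf, hAdj⟩ := char_of_iso G hn φ
    exact lemA G u f huf hn hAdj
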